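/- For every atom p, the excluded middle formula p ∨ ¬p is CL-valid but is not E-valid. -/

import Mathlib

/- Formalization of Lorenzen dialogue games, following Felscher's presentation.

   Propositional formulas are built from atoms using ¬, ∧, ∨, →.  A dialogue
   for a formula φ is a sequence of moves beginning with Proponent (P)
   asserting φ at position 0, with O moving at odd positions and P at even
   positions.  Each later move attacks or defends an earlier move of the other
   player, according to the particle rules.  Structural rules (D10, D11, D12,
   D13, E, and the variants D10*, D10′) constrain dialogues further.  P wins
   if P made the last move and no moves are available to O; φ is S-valid if P
   has an S-winning strategy for φ. -/

namespace LorenzenDialogues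

/-- Propositional formulas: atoms, ¬, ∧, ∨, →. -/
inductive Formula : Type
  | atom : ℕ → Formula
  | neg  : Formula → Formula
  | and  : Formula → Formula → Formula
  | or   : Formula → Formula → Formula
  | imp  : Formula → Formula → Formula
deriving DecidableEq

/-- Statements: formulas together with the symbolic attacks `?`, `∧_L`, `∧_R`. -/
inductive Statement : Type
  | form  : Formula → Statement
  | qmark : Statement
  | andL  : Statement
  | andR  : Statement
deriving DecidableEq

/-- Particle rules, attack part: which statements attack which formulas. -/
inductive Attacks : Statement → Formula → Prop
  | andL (a b : Formula) : Attacks .andL (.and a b)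
  | andR (a b : Formula) : Attacks .andR (.and a b)
  | qmark (a b : Formula) : Attacks .qmark (.or a b)
  | imp (a b : Formula) : Attacks (.form a) (.imp a b)
  | neg (a : Formula) : Attacks (.form a) (.neg a)

/-- Particle rules, defense part: `Defends χ a s` means `s` is a permitted
    defense of the formula `χ` against the attack `a`.  (A negation admits
    no defense.) -/
inductive Defends : Formula → Statement → Statement → Prop
  | andL (a b : Formula) : Defends (.and a b) .andL (.form a)
  | andR (a b : Formula) : Defends (.and a b) .andR (.form b)
  | orL (a b : Formula) : Defends (.or a b) .qmark (.form a)
  | orR (a b : Formula) : Defends (.or a b) .qmark (.form b)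
  | imp (a b : Formula) : Defends (.imp a b) (.form a) (.form b)

/-- A move: a statement, a flag recording whether it is an attack (`true`)
    or a defense (`false`), and the position of the earlier move it attacks,
    resp. the earlier attack it defends against. -/
structure Move : Type where
  statement : Statement
  isAttack : Bool
  ref : ℕ
deriving DecidableEq

/-- A dialogue: the initial formula asserted by P at position 0, followed by
    the list of later moves (the move at list index `i` occupies position
    `i + 1`; O moves at odd positions, P at even positions). -/
structure Dialogue : Type where
  initial : Formula
  moves : List Move

/-- The statement asserted at position `n` (if any). -/
def Dialogue.stmtAt (d : Dialogue) (n : ℕ) : Option Statement :=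
  if n = 0 then some (.form d.initial) else (d.moves[n - 1]?).map Move.statement

/-- The move at position `n ≥ 1` (if any); position 0 is the initial assertion,
    not a move. -/
def Dialogue.moveAt (d : Dialogue) (n : ℕ) : Option Move :=
  if n = 0 then none else d.moves[n - 1]?

/-- The move `m`, played at position `n ≥ 1`, is permitted by the particle
    rules: it refers to an earlier position of the other player; if it is an
    attack, it attacks a formula asserted there, and if it is a defense, it
    responds to an attack played there, as the particle rules prescribe. -/
def MoveOK (d : Dialogue) (n : ℕ) (m : Move) : Prop :=
  m.ref < n ∧ m.ref % 2 ≠ n % 2 ∧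
    (m.isAttack = true →
      ∃ ψ, d.stmtAt m.ref = some (.form ψ) ∧ Attacks m.statement ψ) ∧
    (m.isAttack = false →
      ∃ a χ, d.moveAt m.ref = some a ∧ a.isAttack = true ∧
        d.stmtAt a.ref = some (.form χ) ∧ Defends χ a.statement m.statement)

/-- The dialogue adheres to the particle rules (every move is legal). -/
def ParticleOK (d : Dialogue) : Prop :=
  ∀ i m, d.moves[i]? = some m → MoveOK d (i + 1) m

/-- Position `n` carries a defense of the attack made at position `r`. -/
def IsDefenseOf (d : Dialogue) (n r : ℕ) : Prop :=
  ∃ m, d.moveAt n = some m ∧ m.isAttack = false ∧ m.ref = r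

/-- Position `n` carries an attack on the assertion made at position `r`. -/
def IsAttackOn (d : Dialogue) (n r : ℕ) : Prop :=
  ∃ m, d.moveAt n = some m ∧ m.isAttack = true ∧ m.ref = r

/-- Position `n` carries an attack. -/
def IsAttackPos (d : Dialogue) (n : ℕ) : Prop :=
  ∃ m, d.moveAt n = some m ∧ m.isAttack = true

/-- The attack at position `r` is still open (no defense against it has yet
    been played) before position `k`. -/
def OpenAt (d : Dialogue) (r k : ℕ) : Prop :=
  IsAttackPos d r ∧ ¬ ∃ j, j < k ∧ IsDefenseOf d j r

/-- (D10) P may assert an atomic formula only after it has been asserted by O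
    before. -/
def D10 (d : Dialogue) : Prop :=
  ∀ n p, n % 2 = 0 → d.stmtAt n = some (.form (.atom p)) →
    ∃ j, j < n ∧ j % 2 = 1 ∧ d.stmtAt j = some (.form (.atom p))

/-- (D10*) P may assert an atom `p` only if O has asserted `p` or `¬p`
    before. -/
def D10star (d : Dialogue) : Prop :=
  ∀ n p, n % 2 = 0 → d.stmtAt n = some (.form (.atom p)) →
    ∃ j, j < n ∧ j % 2 = 1 ∧
      (d.stmtAt j = some (.form (.atom p)) ∨
        d.stmtAt j = some (.form (.neg (.atom p))))

/-- (D10′) P may assert an atom `p` only if O has asserted `p` or `¬¬p`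
    before. -/
def D10prime (d : Dialogue) : Prop :=
  ∀ n p, n % 2 = 0 → d.stmtAt n = some (.form (.atom p)) →
    ∃ j, j < n ∧ j % 2 = 1 ∧
      (d.stmtAt j = some (.form (.atom p)) ∨
        d.stmtAt j = some (.form (.neg (.neg (.atom p)))))

/-- (D11) When defending, only the most recent open attack may be responded
    to: the attack defended against is open, and no strictly more recent open
    attack (against the same player) exists. -/
def D11 (d : Dialogue) : Prop :=
  ∀ n r, IsDefenseOf d n r →
    OpenAt d r n ∧ ¬ ∃ r', r < r' ∧ r' < n ∧ r' % 2 = r % 2 ∧ OpenAt d r' n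

/-- (D12) An attack may be answered at most once. -/
def D12 (d : Dialogue) : Prop :=
  ∀ n₁ n₂ r, IsDefenseOf d n₁ r → IsDefenseOf d n₂ r → n₁ = n₂

/-- (D13) A P-assertion (made at an even position) may be attacked at most
    once. -/
def D13 (d : Dialogue) : Prop :=
  ∀ n₁ n₂ r, r % 2 = 0 → IsAttackOn d n₁ r → IsAttackOn d n₂ r → n₁ = n₂

/-- (E) O can react only upon the immediately preceding P-statement. -/
def ERule (d : Dialogue) : Prop :=
  ∀ n m, n % 2 = 1 → d.moveAt n = some m → m.ref = n - 1

/-- A ruleset is a set of structural rules, i.e. a predicate on dialogues. -/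
def Ruleset := Dialogue → Prop

/-- Ruleset D = {D10, D11, D12, D13}. -/
def rulesetD : Ruleset := fun d => D10 d ∧ D11 d ∧ D12 d ∧ D13 d

/-- Ruleset E = D ∪ {E}. -/
def rulesetE : Ruleset := fun d => rulesetD d ∧ ERule d

/-- Ruleset CL = E − {D11, D12} = {D10, D13, E}. -/
def rulesetCL : Ruleset := fun d => D10 d ∧ D13 d ∧ ERule d

/-- Ruleset N = D − {D11, D12} = {D10, D13}. -/
def rulesetN : Ruleset := fun d => D10 d ∧ D13 d

/-- Ruleset E* = {D10*, D11, D12, D13, E}. -/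
def rulesetEstar : Ruleset :=
  fun d => D10star d ∧ D11 d ∧ D12 d ∧ D13 d ∧ ERule d

/-- Ruleset E′ = {D10′, D11, D12, D13, E}. -/
def rulesetEprime : Ruleset :=
  fun d => D10prime d ∧ D11 d ∧ D12 d ∧ D13 d ∧ ERule d

/-- An S-dialogue: a dialogue adhering to the particle rules and to the
    structural rules S. -/
def Legal (S : Ruleset) (d : Dialogue) : Prop := ParticleOK d ∧ S d

/-- Extend a dialogue by one move. -/
def Dialogue.extend (d : Dialogue) (m : Move) : Dialogue :=
  ⟨d.initial, d.moves ++ [m]⟩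

/-- The position about to be played. -/
def nextPos (d : Dialogue) : ℕ := d.moves.length + 1

/-- It is P's turn (the next position is even). -/
def PTurn (d : Dialogue) : Prop := nextPos d % 2 = 0

/-- The move `m` legally extends the S-dialogue `d`. -/
def LegalExt (S : Ruleset) (d : Dialogue) (m : Move) : Prop :=
  Legal S (d.extend m)

/-- `PWinningC S C d` holds when P, moving under the additional constraint
    `C` on P's own choices, has a winning strategy in the S-dialogue game
    continuing the dialogue `d`: at P's turn, P has a legal move (satisfying
    `C`) after which P is still winning; at O's turn, every legal O-move
    leads to a position where P is winning (in particular, if no O-move is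
    available, P has won: P made the last move and O cannot move). -/
inductive PWinningC (S : Ruleset) (C : Dialogue → Move → Prop) : Dialogue → Prop
  | pMove (d : Dialogue) (m : Move) (hturn : PTurn d)
      (hm : LegalExt S d m) (hC : C d m)
      (h : PWinningC S C (d.extend m)) : PWinningC S C d
  | oMoves (d : Dialogue) (hturn : ¬ PTurn d)
      (h : ∀ m, LegalExt S d m → PWinningC S C (d.extend m)) :
      PWinningC S C d

/-- P has a winning strategy continuing the S-dialogue `d`. -/
def PWinning (S : Ruleset) (d : Dialogue) : Prop :=
  PWinningC S (fun _ _ => True) d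

/-- `valid S φ` (written `⊨_S φ`): the opening assertion of φ is itself a
    legal S-dialogue and P has an S-winning strategy for φ. -/
def valid (S : Ruleset) (φ : Formula) : Prop :=
  Legal S ⟨φ, []⟩ ∧ PWinning S ⟨φ, []⟩

/-- Derivability in intuitionistic propositional logic (a Hilbert-style
    axiomatization with modus ponens). -/
inductive IProv : Formula → Prop
  | k (a b : Formula) : IProv (.imp a (.imp b a))
  | s (a b c : Formula) :
      IProv (.imp (.imp a (.imp b c)) (.imp (.imp a b) (.imp a c)))
  | andE1 (a b : Formula) : IProv (.imp (.and a b) a)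
  | andE2 (a b : Formula) : IProv (.imp (.and a b) b)
  | andI (a b : Formula) : IProv (.imp a (.imp b (.and a b)))
  | orI1 (a b : Formula) : IProv (.imp a (.or a b))
  | orI2 (a b : Formula) : IProv (.imp b (.or a b))
  | orE (a b c : Formula) :
      IProv (.imp (.imp a c) (.imp (.imp b c) (.imp (.or a b) c)))
  | negI (a b : Formula) :
      IProv (.imp (.imp a b) (.imp (.imp a (.neg b)) (.neg a)))
  | negE (a b : Formula) : IProv (.imp (.neg a) (.imp a b))
  | mp (a b : Formula) : IProv (.imp a b) → IProv a → IProv b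

/-- The stability principle ¬¬p → p for the atom `p`. -/
def stab (p : ℕ) : Formula := .imp (.neg (.neg (.atom p))) (.atom p)

/-- Stable logic: intuitionistic propositional logic plus all instances of
    the stability scheme ¬¬p → p for atoms p, closed under modus ponens. -/
inductive StableProv : Formula → Prop
  | intuit (a : Formula) : IProv a → StableProv a
  | stab (p : ℕ) : StableProv (stab p)
  | mp (a b : Formula) : StableProv (.imp a b) → StableProv a → StableProv b

/-- Boolean evaluation of a formula under a valuation of its atoms. -/
def Formula.eval (v : ℕ → Bool) : Formula → Bool
  | .atom p => v p
  | .neg a => !(a.eval v)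
  | .and a b => a.eval v && b.eval v
  | .or a b => a.eval v || b.eval v
  | .imp a b => !(a.eval v) || b.eval v

/-- A classical tautology: true under every Boolean valuation. -/
def Tautology (φ : Formula) : Prop := ∀ v, φ.eval v = true

/-- Uniform substitution of formulas for atoms, applied homomorphically. -/
def Formula.subst (σ : ℕ → Formula) : Formula → Formula
  | .atom p => σ p
  | .neg a => .neg (a.subst σ)
  | .and a b => .and (a.subst σ) (b.subst σ)
  | .or a b => .or (a.subst σ) (b.subst σ)
  | .imp a b => .imp (a.subst σ) (b.subst σ)

/-- The atoms occurring in a formula. -/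
def Formula.atoms : Formula → List ℕ
  | .atom p => [p]
  | .neg a => a.atoms
  | .and a b => a.atoms ++ b.atoms
  | .or a b => a.atoms ++ b.atoms
  | .imp a b => a.atoms ++ b.atoms

/-- Conjunction of a nonempty list of formulas. -/
def conjList (f : Formula) : List Formula → Formula
  | [] => f
  | g :: gs => .and f (conjList g gs)

/-- The conjunction (¬¬p → p) ∧ … of stability instances for the atoms
    `p :: ps`. -/
def stabConj (p : ℕ) (ps : List ℕ) : Formula :=
  conjList (stab p) (ps.map stab)


/-! ### Auxiliary material for excluded middle -/

lemma stmtAt_some_le {d : Dialogue} {n : ℕ} {s : Statement}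
    (h : d.stmtAt n = some s) : n ≤ d.moves.length := by
  unfold Dialogue.stmtAt at h
  split at h
  · omega
  · rcases Option.map_eq_some_iff.1 h with ⟨m, hm, -⟩
    obtain ⟨hlt, -⟩ := List.getElem?_eq_some_iff.1 hm
    omega

lemma moveAt_some_le {d : Dialogue} {n : ℕ} {m : Move}
    (h : d.moveAt n = some m) : 1 ≤ n ∧ n ≤ d.moves.length := by
  unfold Dialogue.moveAt at h
  split at h
  · exact absurd h (by simp)
  · obtain ⟨hlt, -⟩ := List.getElem?_eq_some_iff.1 h
    omega

/-- Excluded middle formula. -/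
def φEM (p : ℕ) : Formula := .or (.atom p) (.neg (.atom p))
def mv1 : Move := ⟨.qmark, true, 0⟩
def mv2 (p : ℕ) : Move := ⟨.form (.neg (.atom p)), false, 1⟩
def mv3 (p : ℕ) : Move := ⟨.form (.atom p), true, 2⟩
def mv4 (p : ℕ) : Move := ⟨.form (.atom p), false, 1⟩

def dEM0 (p : ℕ) : Dialogue := ⟨φEM p, []⟩
def dEM1 (p : ℕ) : Dialogue := ⟨φEM p, [mv1]⟩
def dEM2 (p : ℕ) : Dialogue := ⟨φEM p, [mv1, mv2 p]⟩
def dEM3 (p : ℕ) : Dialogue := ⟨φEM p, [mv1, mv2 p, mv3 p]⟩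
def dEM4 (p : ℕ) : Dialogue := ⟨φEM p, [mv1, mv2 p, mv3 p, mv4 p]⟩

lemma ext0 (p : ℕ) : (dEM0 p).extend mv1 = dEM1 p := rfl
lemma ext1 (p : ℕ) : (dEM1 p).extend (mv2 p) = dEM2 p := rfl
lemma ext2 (p : ℕ) : (dEM2 p).extend (mv3 p) = dEM3 p := rfl
lemma ext3 (p : ℕ) : (dEM3 p).extend (mv4 p) = dEM4 p := rfl
/-! ### Legality of the concrete dialogues -/

lemma moveOK1 (p : ℕ) (d : Dialogue) (h : d.initial = φEM p) :
    MoveOK d 1 mv1 := by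
  refine ⟨by norm_num [mv1, mv2, mv3, mv4], by norm_num [mv1, mv2, mv3, mv4], ?_, ?_⟩
  · intro _
    exact ⟨φEM p, by rw [← h]; rfl, Attacks.qmark _ _⟩
  · intro hc; exact absurd hc (by simp [mv1])

lemma particleOK1 (p : ℕ) : ParticleOK (dEM1 p) := by
  intro i m hm
  obtain ⟨hlt, -⟩ := List.getElem?_eq_some_iff.1 hm
  simp only [dEM1, dEM2, dEM3, dEM4, List.length_cons, List.length_nil] at hlt
  interval_cases i
  · cases show some (mv1) = some m from hm; exact moveOK1 p _ rfl

lemma particleOK2 (p : ℕ) : ParticleOK (dEM2 p) := by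
  intro i m hm
  obtain ⟨hlt, -⟩ := List.getElem?_eq_some_iff.1 hm
  simp only [dEM1, dEM2, dEM3, dEM4, List.length_cons, List.length_nil] at hlt
  interval_cases i
  · cases show some (mv1) = some m from hm; exact moveOK1 p _ rfl
  · cases show some (mv2 p) = some m from hm
    refine ⟨by norm_num [mv1, mv2, mv3, mv4], by norm_num [mv1, mv2, mv3, mv4], ?_, ?_⟩
    · intro hc; exact absurd hc (by simp [mv2])
    · intro _
      exact ⟨mv1, φEM p, rfl, rfl, rfl, Defends.orR _ _⟩

lemma particleOK3 (p : ℕ) : ParticleOK (dEM3 p) := by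
  intro i m hm
  obtain ⟨hlt, -⟩ := List.getElem?_eq_some_iff.1 hm
  simp only [dEM1, dEM2, dEM3, dEM4, List.length_cons, List.length_nil] at hlt
  interval_cases i
  · cases show some (mv1) = some m from hm; exact moveOK1 p _ rfl
  · cases show some (mv2 p) = some m from hm
    refine ⟨by norm_num [mv1, mv2, mv3, mv4], by norm_num [mv1, mv2, mv3, mv4], ?_, ?_⟩
    · intro hc; exact absurd hc (by simp [mv2])
    · intro _
      exact ⟨mv1, φEM p, rfl, rfl, rfl, Defends.orR _ _⟩
  · cases show some (mv3 p) = some m from hm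
    refine ⟨by norm_num [mv1, mv2, mv3, mv4], by norm_num [mv1, mv2, mv3, mv4], ?_, ?_⟩
    · intro _
      exact ⟨.neg (.atom p), rfl, Attacks.neg _⟩
    · intro hc; exact absurd hc (by simp [mv3])

lemma particleOK4 (p : ℕ) : ParticleOK (dEM4 p) := by
  intro i m hm
  obtain ⟨hlt, -⟩ := List.getElem?_eq_some_iff.1 hm
  simp only [dEM1, dEM2, dEM3, dEM4, List.length_cons, List.length_nil] at hlt
  interval_cases i
  · cases show some (mv1) = some m from hm; exact moveOK1 p _ rfl
  · cases show some (mv2 p) = some m from hm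
    refine ⟨by norm_num [mv1, mv2, mv3, mv4], by norm_num [mv1, mv2, mv3, mv4], ?_, ?_⟩
    · intro hc; exact absurd hc (by simp [mv2])
    · intro _
      exact ⟨mv1, φEM p, rfl, rfl, rfl, Defends.orR _ _⟩
  · cases show some (mv3 p) = some m from hm
    refine ⟨by norm_num [mv1, mv2, mv3, mv4], by norm_num [mv1, mv2, mv3, mv4], ?_, ?_⟩
    · intro _
      exact ⟨.neg (.atom p), rfl, Attacks.neg _⟩
    · intro hc; exact absurd hc (by simp [mv3])
  · cases show some (mv4 p) = some m from hm
    refine ⟨by norm_num [mv1, mv2, mv3, mv4], by norm_num [mv1, mv2, mv3, mv4], ?_, ?_⟩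
    · intro hc; exact absurd hc (by simp [mv4])
    · intro _
      exact ⟨mv1, φEM p, rfl, rfl, rfl, Defends.orL _ _⟩
/-! ### Characterizations of moveAt / stmtAt -/

lemma moveAt1_cases {p n : ℕ} {m : Move} (h : (dEM1 p).moveAt n = some m) :
    n = 1 ∧ m = mv1 := by
  obtain ⟨h1, h2⟩ := moveAt_some_le h
  simp only [dEM1, List.length_cons, List.length_nil] at h2
  interval_cases n
  · exact ⟨rfl, (Option.some.inj h).symm⟩

lemma moveAt2_cases {p n : ℕ} {m : Move} (h : (dEM2 p).moveAt n = some m) :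
    (n = 1 ∧ m = mv1) ∨ (n = 2 ∧ m = mv2 p) := by
  obtain ⟨h1, h2⟩ := moveAt_some_le h
  simp only [dEM2, List.length_cons, List.length_nil] at h2
  interval_cases n
  · exact Or.inl ⟨rfl, (Option.some.inj h).symm⟩
  · exact Or.inr ⟨rfl, (Option.some.inj h).symm⟩

lemma moveAt3_cases {p n : ℕ} {m : Move} (h : (dEM3 p).moveAt n = some m) :
    (n = 1 ∧ m = mv1) ∨ (n = 2 ∧ m = mv2 p) ∨ (n = 3 ∧ m = mv3 p) := by
  obtain ⟨h1, h2⟩ := moveAt_some_le h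
  simp only [dEM3, List.length_cons, List.length_nil] at h2
  interval_cases n
  · exact Or.inl ⟨rfl, (Option.some.inj h).symm⟩
  · exact Or.inr (Or.inl ⟨rfl, (Option.some.inj h).symm⟩)
  · exact Or.inr (Or.inr ⟨rfl, (Option.some.inj h).symm⟩)

lemma moveAt4_cases {p n : ℕ} {m : Move} (h : (dEM4 p).moveAt n = some m) :
    (n = 1 ∧ m = mv1) ∨ (n = 2 ∧ m = mv2 p) ∨ (n = 3 ∧ m = mv3 p) ∨
      (n = 4 ∧ m = mv4 p) := by
  obtain ⟨h1, h2⟩ := moveAt_some_le h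
  simp only [dEM4, List.length_cons, List.length_nil] at h2
  interval_cases n
  · exact Or.inl ⟨rfl, (Option.some.inj h).symm⟩
  · exact Or.inr (Or.inl ⟨rfl, (Option.some.inj h).symm⟩)
  · exact Or.inr (Or.inr (Or.inl ⟨rfl, (Option.some.inj h).symm⟩))
  · exact Or.inr (Or.inr (Or.inr ⟨rfl, (Option.some.inj h).symm⟩))

lemma stmtAt0_lemma {p n : ℕ} {s : Statement} (h : (dEM0 p).stmtAt n = some s) :
    n = 0 ∧ s = .form (φEM p) := by
  have h2 := stmtAt_some_le h
  simp only [dEM0, List.length_nil] at h2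
  interval_cases n
  · exact ⟨rfl, (Option.some.inj h).symm⟩

lemma stmtAt1_cases {p n : ℕ} {s : Statement} (h : (dEM1 p).stmtAt n = some s) :
    (n = 0 ∧ s = .form (φEM p)) ∨ (n = 1 ∧ s = .qmark) := by
  have h2 := stmtAt_some_le h
  simp only [dEM1, List.length_cons, List.length_nil] at h2
  interval_cases n
  · exact Or.inl ⟨rfl, (Option.some.inj h).symm⟩
  · exact Or.inr ⟨rfl, (Option.some.inj h).symm⟩

lemma stmtAt2_cases {p n : ℕ} {s : Statement} (h : (dEM2 p).stmtAt n = some s) :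
    (n = 0 ∧ s = .form (φEM p)) ∨ (n = 1 ∧ s = .qmark) ∨
      (n = 2 ∧ s = .form (.neg (.atom p))) := by
  have h2 := stmtAt_some_le h
  simp only [dEM2, List.length_cons, List.length_nil] at h2
  interval_cases n
  · exact Or.inl ⟨rfl, (Option.some.inj h).symm⟩
  · exact Or.inr (Or.inl ⟨rfl, (Option.some.inj h).symm⟩)
  · exact Or.inr (Or.inr ⟨rfl, (Option.some.inj h).symm⟩)

lemma stmtAt3_cases {p n : ℕ} {s : Statement} (h : (dEM3 p).stmtAt n = some s) :
    (n = 0 ∧ s = .form (φEM p)) ∨ (n = 1 ∧ s = .qmark) ∨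
      (n = 2 ∧ s = .form (.neg (.atom p))) ∨ (n = 3 ∧ s = .form (.atom p)) := by
  have h2 := stmtAt_some_le h
  simp only [dEM3, List.length_cons, List.length_nil] at h2
  interval_cases n
  · exact Or.inl ⟨rfl, (Option.some.inj h).symm⟩
  · exact Or.inr (Or.inl ⟨rfl, (Option.some.inj h).symm⟩)
  · exact Or.inr (Or.inr (Or.inl ⟨rfl, (Option.some.inj h).symm⟩))
  · exact Or.inr (Or.inr (Or.inr ⟨rfl, (Option.some.inj h).symm⟩))

lemma stmtAt4_cases {p n : ℕ} {s : Statement} (h : (dEM4 p).stmtAt n = some s) :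
    (n = 0 ∧ s = .form (φEM p)) ∨ (n = 1 ∧ s = .qmark) ∨
      (n = 2 ∧ s = .form (.neg (.atom p))) ∨ (n = 3 ∧ s = .form (.atom p)) ∨
      (n = 4 ∧ s = .form (.atom p)) := by
  have h2 := stmtAt_some_le h
  simp only [dEM4, List.length_cons, List.length_nil] at h2
  interval_cases n
  · exact Or.inl ⟨rfl, (Option.some.inj h).symm⟩
  · exact Or.inr (Or.inl ⟨rfl, (Option.some.inj h).symm⟩)
  · exact Or.inr (Or.inr (Or.inl ⟨rfl, (Option.some.inj h).symm⟩))
  · exact Or.inr (Or.inr (Or.inr (Or.inl ⟨rfl, (Option.some.inj h).symm⟩)))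
  · exact Or.inr (Or.inr (Or.inr (Or.inr ⟨rfl, (Option.some.inj h).symm⟩)))

/-! ### Structural rules for the concrete dialogues -/

lemma d10_0 (p : ℕ) : D10 (dEM0 p) := by
  intro n q hn hs
  obtain ⟨rfl, hs'⟩ := stmtAt0_lemma hs
  exact absurd hs' (by simp [φEM])

lemma d10_1 (p : ℕ) : D10 (dEM1 p) := by
  intro n q hn hs
  rcases stmtAt1_cases hs with ⟨rfl, hs'⟩ | ⟨rfl, hs'⟩
  · exact absurd hs' (by simp [φEM])
  · exact absurd hs' (by simp)

lemma d10_2 (p : ℕ) : D10 (dEM2 p) := by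
  intro n q hn hs
  rcases stmtAt2_cases hs with ⟨rfl, hs'⟩ | ⟨rfl, hs'⟩ | ⟨rfl, hs'⟩
  · exact absurd hs' (by simp [φEM])
  · exact absurd hs' (by simp)
  · exact absurd hs' (by simp)

lemma d10_3 (p : ℕ) : D10 (dEM3 p) := by
  intro n q hn hs
  rcases stmtAt3_cases hs with ⟨rfl, hs'⟩ | ⟨rfl, hs'⟩ | ⟨rfl, hs'⟩ | ⟨rfl, hs'⟩
  · exact absurd hs' (by simp [φEM])
  · exact absurd hs' (by simp)
  · exact absurd hs' (by simp)
  · omega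
lemma d10_4 (p : ℕ) : D10 (dEM4 p) := by
  intro n q hn hs
  rcases stmtAt4_cases hs with ⟨rfl, hs'⟩ | ⟨rfl, hs'⟩ | ⟨rfl, hs'⟩ | ⟨rfl, hs'⟩
    | ⟨rfl, hs'⟩
  · exact absurd hs' (by simp [φEM])
  · exact absurd hs' (by simp)
  · exact absurd hs' (by simp)
  · omega
  · have hq : q = p := by
      cases hs'
      rfl
    subst hq
    exact ⟨3, by omega, by omega, rfl⟩

lemma d13_0 (p : ℕ) : D13 (dEM0 p) := by
  rintro n₁ n₂ r hr ⟨m, hm, -, -⟩ -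
  obtain ⟨h1, h2⟩ := moveAt_some_le hm
  simp only [dEM0, List.length_nil] at h2
  omega

lemma d13_1 (p : ℕ) : D13 (dEM1 p) := by
  rintro n₁ n₂ r hr ⟨m, hm, -, -⟩ ⟨m', hm', -, -⟩
  obtain ⟨rfl, -⟩ := moveAt1_cases hm
  obtain ⟨rfl, -⟩ := moveAt1_cases hm'
  rfl

lemma d13_2 (p : ℕ) : D13 (dEM2 p) := by
  rintro n₁ n₂ r hr ⟨m, hm, ha, rfl⟩ ⟨m', hm', ha', hr'⟩
  rcases moveAt2_cases hm with ⟨rfl, rfl⟩ | ⟨rfl, rfl⟩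
  · rcases moveAt2_cases hm' with ⟨rfl, rfl⟩ | ⟨rfl, rfl⟩
    · rfl
    · exact absurd ha' (by simp [mv2])
  · exact absurd ha (by simp [mv2])

lemma d13_3 (p : ℕ) : D13 (dEM3 p) := by
  rintro n₁ n₂ r hr ⟨m, hm, ha, rfl⟩ ⟨m', hm', ha', hr'⟩
  rcases moveAt3_cases hm with ⟨rfl, rfl⟩ | ⟨rfl, rfl⟩ | ⟨rfl, rfl⟩
  · rcases moveAt3_cases hm' with ⟨rfl, rfl⟩ | ⟨rfl, rfl⟩ | ⟨rfl, rfl⟩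
    · rfl
    · exact absurd ha' (by simp [mv2])
    · simp only [mv1, mv3] at hr' ⊢
      omega
  · exact absurd ha (by simp [mv2])
  · rcases moveAt3_cases hm' with ⟨rfl, rfl⟩ | ⟨rfl, rfl⟩ | ⟨rfl, rfl⟩
    · simp only [mv1, mv3] at hr' ⊢
      omega
    · exact absurd ha' (by simp [mv2])
    · rfl

lemma d13_4 (p : ℕ) : D13 (dEM4 p) := by
  rintro n₁ n₂ r hr ⟨m, hm, ha, rfl⟩ ⟨m', hm', ha', hr'⟩
  rcases moveAt4_cases hm with ⟨rfl, rfl⟩ | ⟨rfl, rfl⟩ | ⟨rfl, rfl⟩ | ⟨rfl, rfl⟩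
  · rcases moveAt4_cases hm' with ⟨rfl, rfl⟩ | ⟨rfl, rfl⟩ | ⟨rfl, rfl⟩ | ⟨rfl, rfl⟩
    · rfl
    · exact absurd ha' (by simp [mv2])
    · simp only [mv1, mv3] at hr' ⊢
      omega
    · exact absurd ha' (by simp [mv4])
  · exact absurd ha (by simp [mv2])
  · rcases moveAt4_cases hm' with ⟨rfl, rfl⟩ | ⟨rfl, rfl⟩ | ⟨rfl, rfl⟩ | ⟨rfl, rfl⟩
    · simp only [mv1, mv3] at hr' ⊢
      omega
    · exact absurd ha' (by simp [mv2])
    · rfl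
    · exact absurd ha' (by simp [mv4])
  · exact absurd ha (by simp [mv4])

lemma erule_0 (p : ℕ) : ERule (dEM0 p) := by
  rintro n m hn hm
  obtain ⟨h1, h2⟩ := moveAt_some_le hm
  simp only [dEM0, List.length_nil] at h2
  omega

lemma erule_1 (p : ℕ) : ERule (dEM1 p) := by
  rintro n m hn hm
  obtain ⟨rfl, rfl⟩ := moveAt1_cases hm
  rfl

lemma erule_2 (p : ℕ) : ERule (dEM2 p) := by
  rintro n m hn hm
  rcases moveAt2_cases hm with ⟨rfl, rfl⟩ | ⟨rfl, rfl⟩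
  · rfl
  · omega

lemma erule_3 (p : ℕ) : ERule (dEM3 p) := by
  rintro n m hn hm
  rcases moveAt3_cases hm with ⟨rfl, rfl⟩ | ⟨rfl, rfl⟩ | ⟨rfl, rfl⟩
  · rfl
  · omega
  · rfl

lemma erule_4 (p : ℕ) : ERule (dEM4 p) := by
  rintro n m hn hm
  rcases moveAt4_cases hm with ⟨rfl, rfl⟩ | ⟨rfl, rfl⟩ | ⟨rfl, rfl⟩ | ⟨rfl, rfl⟩
  · rfl
  · omega
  · rfl
  · omega

lemma d11_1 (p : ℕ) : D11 (dEM1 p) := by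
  rintro n r ⟨m, hm, ha, rfl⟩
  obtain ⟨rfl, rfl⟩ := moveAt1_cases hm
  exact absurd ha (by simp [mv1])

lemma d12_1 (p : ℕ) : D12 (dEM1 p) := by
  rintro n₁ n₂ r ⟨m, hm, ha, rfl⟩ -
  obtain ⟨rfl, rfl⟩ := moveAt1_cases hm
  exact absurd ha (by simp [mv1])

lemma d11_3 (p : ℕ) : D11 (dEM3 p) := by
  rintro n r ⟨m, hm, ha, rfl⟩
  rcases moveAt3_cases hm with ⟨rfl, rfl⟩ | ⟨rfl, rfl⟩ | ⟨rfl, rfl⟩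
  · exact absurd ha (by simp [mv1])
  · constructor
    · refine ⟨⟨mv1, rfl, rfl⟩, ?_⟩
      rintro ⟨j, hj, m', hm', ha', -⟩
      rcases moveAt3_cases hm' with ⟨rfl, rfl⟩ | ⟨rfl, rfl⟩ | ⟨rfl, rfl⟩
      · exact absurd ha' (by simp [mv1])
      · omega
      · omega
    · rintro ⟨r', hr1, hr2, -, -⟩
      simp only [mv2] at hr1 hr2
      omega
  · exact absurd ha (by simp [mv3])

lemma d12_3 (p : ℕ) : D12 (dEM3 p) := by
  rintro n₁ n₂ r ⟨m, hm, ha, rfl⟩ ⟨m', hm', ha', -⟩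
  rcases moveAt3_cases hm with ⟨rfl, rfl⟩ | ⟨rfl, rfl⟩ | ⟨rfl, rfl⟩
  · exact absurd ha (by simp [mv1])
  · rcases moveAt3_cases hm' with ⟨rfl, rfl⟩ | ⟨rfl, rfl⟩ | ⟨rfl, rfl⟩
    · exact absurd ha' (by simp [mv1])
    · rfl
    · exact absurd ha' (by simp [mv3])
  · exact absurd ha (by simp [mv3])

/-! ### Legality of the concrete dialogues -/

lemma particleOK0 (p : ℕ) : ParticleOK (dEM0 p) := by
  intro i m hm
  obtain ⟨hlt, -⟩ := List.getElem?_eq_some_iff.1 hm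
  simp only [dEM0, List.length_nil] at hlt
  omega

lemma legalCL0 (p : ℕ) : Legal rulesetCL (dEM0 p) :=
  ⟨particleOK0 p, d10_0 p, d13_0 p, erule_0 p⟩
lemma legalCL2 (p : ℕ) : Legal rulesetCL (dEM2 p) :=
  ⟨particleOK2 p, d10_2 p, d13_2 p, erule_2 p⟩
lemma legalCL4 (p : ℕ) : Legal rulesetCL (dEM4 p) :=
  ⟨particleOK4 p, d10_4 p, d13_4 p, erule_4 p⟩
lemma legalE1 (p : ℕ) : Legal rulesetE (dEM1 p) :=
  ⟨particleOK1 p, ⟨d10_1 p, d11_1 p, d12_1 p, d13_1 p⟩, erule_1 p⟩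
lemma legalE3 (p : ℕ) : Legal rulesetE (dEM3 p) :=
  ⟨particleOK3 p, ⟨d10_3 p, d11_3 p, d12_3 p, d13_3 p⟩, erule_3 p⟩
/-! ### Classification of legal moves -/

/-- O's only legal move at position 1 (any ruleset containing nothing extra). -/
lemma classO1 {p : ℕ} {S : Ruleset} {m : Move}
    (h : Legal S ((dEM0 p).extend m)) : m = mv1 := by
  obtain ⟨s, b, r⟩ := m
  obtain ⟨hp, -⟩ := h
  obtain ⟨h1, h2, hatk, hdef⟩ :=
    hp 0 ⟨s, b, r⟩ (rfl : ((dEM0 p).extend ⟨s, b, r⟩).moves[0]? = some _)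
  have h1' : r < 1 := h1
  have hr : r = 0 := by omega
  subst hr
  cases b
  · obtain ⟨a, χ, hma, -, -, -⟩ := hdef rfl
    exact absurd hma (by simp [Dialogue.moveAt])
  · obtain ⟨ψ, hψ, hA⟩ := hatk rfl
    have hψ' : Statement.form (φEM p) = .form ψ := Option.some.inj hψ
    obtain rfl : φEM p = ψ := by injection hψ'
    cases hA
    rfl

/-- O's only legal move at position 3 in the CL game. -/
lemma classO3 {p : ℕ} {m : Move}
    (h : Legal rulesetCL ((dEM2 p).extend m)) : m = mv3 p := by
  obtain ⟨s, b, r⟩ := m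
  obtain ⟨hp, -, -, hE⟩ := h
  have hr : r = 2 := hE 3 ⟨s, b, r⟩ (by omega)
    (rfl : ((dEM2 p).extend ⟨s, b, r⟩).moveAt 3 = some _)
  subst hr
  obtain ⟨h1, h2, hatk, hdef⟩ :=
    hp 2 ⟨s, b, 2⟩ (rfl : ((dEM2 p).extend ⟨s, b, 2⟩).moves[2]? = some _)
  cases b
  · obtain ⟨a, χ, hma, ha, -, -⟩ := hdef rfl
    obtain rfl : mv2 p = a := Option.some.inj hma
    exact absurd ha (by simp [mv2])
  · obtain ⟨ψ, hψ, hA⟩ := hatk rfl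
    have hψ' : Statement.form (.neg (.atom p)) = .form ψ := Option.some.inj hψ
    obtain rfl : Formula.neg (.atom p) = ψ := by injection hψ'
    cases hA
    rfl

/-- O has no legal move at position 5 in the CL game. -/
lemma classO5 {p : ℕ} {m : Move}
    (h : Legal rulesetCL ((dEM4 p).extend m)) : False := by
  obtain ⟨s, b, r⟩ := m
  obtain ⟨hp, -, -, hE⟩ := h
  have hr : r = 4 := hE 5 ⟨s, b, r⟩ (by omega)
    (rfl : ((dEM4 p).extend ⟨s, b, r⟩).moveAt 5 = some _)
  subst hr
  obtain ⟨h1, h2, hatk, hdef⟩ :=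
    hp 4 ⟨s, b, 4⟩ (rfl : ((dEM4 p).extend ⟨s, b, 4⟩).moves[4]? = some _)
  cases b
  · obtain ⟨a, χ, hma, ha, -, -⟩ := hdef rfl
    obtain rfl : mv4 p = a := Option.some.inj hma
    exact absurd ha (by simp [mv4])
  · obtain ⟨ψ, hψ, hA⟩ := hatk rfl
    have hψ' : Statement.form (.atom p) = .form ψ := Option.some.inj hψ
    obtain rfl : Formula.atom p = ψ := by injection hψ'
    cases hA

/-- P's only legal move at position 2 in the E game. -/
lemma classP2 {p : ℕ} {m : Move}
    (h : Legal rulesetE ((dEM1 p).extend m)) : m = mv2 p := by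
  obtain ⟨s, b, r⟩ := m
  obtain ⟨hp, ⟨hD10, -, -, -⟩, -⟩ := h
  obtain ⟨h1, h2, hatk, hdef⟩ :=
    hp 1 ⟨s, b, r⟩ (rfl : ((dEM1 p).extend ⟨s, b, r⟩).moves[1]? = some _)
  have h1' : r < 2 := h1
  have h2' : r % 2 ≠ 2 % 2 := h2
  have hr : r = 1 := by omega
  subst hr
  cases b
  · obtain ⟨a, χ, hma, ha, hsa, hd⟩ := hdef rfl
    obtain rfl : mv1 = a := Option.some.inj hma
    have hχ : Statement.form (φEM p) = .form χ := Option.some.inj hsa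
    obtain rfl : φEM p = χ := by injection hχ
    cases hd with
    | orL =>
        obtain ⟨j, hj1, hj2, hsj⟩ := hD10 2 p (by omega)
          (rfl : ((dEM1 p).extend ⟨.form (.atom p), false, 1⟩).stmtAt 2 = some _)
        obtain rfl : j = 1 := by omega
        exact absurd (Option.some.inj hsj) (by simp [Dialogue.extend, dEM1, mv1])
    | orR => rfl
  · obtain ⟨ψ, hψ, hA⟩ := hatk rfl
    exact absurd (Option.some.inj hψ) (by simp [Dialogue.extend, dEM1, mv1])

/-- P has no legal move at position 4 in the E game. -/
lemma classP4 {p : ℕ} {m : Move}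
    (h : Legal rulesetE ((dEM3 p).extend m)) : False := by
  obtain ⟨s, b, r⟩ := m
  obtain ⟨hp, ⟨-, -, hD12, -⟩, -⟩ := h
  obtain ⟨h1, h2, hatk, hdef⟩ :=
    hp 3 ⟨s, b, r⟩ (rfl : ((dEM3 p).extend ⟨s, b, r⟩).moves[3]? = some _)
  have h1' : r < 4 := h1
  have h2' : r % 2 ≠ 4 % 2 := h2
  have hr : r = 1 ∨ r = 3 := by omega
  cases b
  · obtain ⟨a, χ, hma, ha, hsa, hd⟩ := hdef rfl
    rcases hr with rfl | rfl
    · have e1 : IsDefenseOf ((dEM3 p).extend ⟨s, false, 1⟩) 2 1 :=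
        ⟨mv2 p, rfl, rfl, rfl⟩
      have e2 : IsDefenseOf ((dEM3 p).extend ⟨s, false, 1⟩) 4 1 :=
        ⟨⟨s, false, 1⟩, rfl, rfl, rfl⟩
      exact absurd (hD12 2 4 1 e1 e2) (by omega)
    · obtain rfl : mv3 p = a := Option.some.inj hma
      have hχ : Statement.form (.neg (.atom p)) = .form χ := Option.some.inj hsa
      obtain rfl : Formula.neg (.atom p) = χ := by injection hχ
      cases hd
  · obtain ⟨ψ, hψ, hA⟩ := hatk rfl
    rcases hr with rfl | rfl
    · exact absurd (Option.some.inj hψ) (by simp [Dialogue.extend, dEM3, mv1])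
    · have hψ' : Statement.form (.atom p) = .form ψ := Option.some.inj hψ
      obtain rfl : Formula.atom p = ψ := by injection hψ'
      cases hA

/-! ### The main theorem -/

/-- For every atom p, excluded middle p ∨ ¬p is CL-valid but not E-valid. -/
theorem excluded_middle_CL_valid_not_E_valid (p : ℕ) :
    valid rulesetCL (.or (.atom p) (.neg (.atom p))) ∧
    ¬ valid rulesetE (.or (.atom p) (.neg (.atom p))) := by
  constructor
  · refine ⟨legalCL0 p, ?_⟩
    show PWinningC rulesetCL (fun _ _ => True) (dEM0 p)
    apply PWinningC.oMoves
    · show ¬ (1 % 2 = 0)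
      decide
    intro m hm
    obtain rfl := classO1 hm
    rw [ext0]
    refine PWinningC.pMove _ (mv2 p) ?_ ?_ trivial ?_
    · norm_num [PTurn, nextPos, dEM1]
    · rw [LegalExt, ext1]; exact legalCL2 p
    rw [ext1]
    apply PWinningC.oMoves
    · show ¬ (3 % 2 = 0)
      decide
    intro m hm
    obtain rfl := classO3 hm
    rw [ext2]
    refine PWinningC.pMove _ (mv4 p) ?_ ?_ trivial ?_
    · norm_num [PTurn, nextPos, dEM3]
    · rw [LegalExt, ext3]; exact legalCL4 p
    rw [ext3]
    apply PWinningC.oMoves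
    · show ¬ (5 % 2 = 0)
      decide
    intro m hm
    exact absurd hm (fun h => classO5 h)
  · rintro ⟨-, hwin⟩
    rw [show Dialogue.mk (.or (.atom p) (.neg (.atom p))) [] = dEM0 p from rfl]
      at hwin
    cases hwin with
    | pMove d m hturn hm hC h =>
        exact absurd hturn (by norm_num [PTurn, nextPos, dEM0])
    | oMoves d hturn h =>
      have h1 := h mv1 (by rw [LegalExt, ext0]; exact legalE1 p)
      rw [ext0] at h1
      cases h1 with
      | oMoves d hturn h => exact hturn (by norm_num [PTurn, nextPos, dEM1])
      | pMove d m hturn hm hC h =>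
        rw [LegalExt] at hm
        obtain rfl := classP2 hm
        rw [ext1] at h
        cases h with
        | pMove d m hturn hm hC h =>
            exact absurd hturn (by norm_num [PTurn, nextPos, dEM2])
        | oMoves d hturn h =>
          have h3 := h (mv3 p) (by rw [LegalExt, ext2]; exact legalE3 p)
          rw [ext2] at h3
          cases h3 with
          | oMoves d hturn h => exact hturn (by norm_num [PTurn, nextPos, dEM3])
          | pMove d m hturn hm hC h =>
            rw [LegalExt] at hm
            exact classP4 hm
end LorenzenDialogues
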